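/- Let n ≥ 2 and let 0 < ε < n/(27(n−1)). Then for every configuration z ∈ (ℝ²)ⁿ, the (Fréchet) derivative of the ε-Go-To-The-Average evolution function F at z is an invertible linear map from ℝ^{2n} to ℝ^{2n}; equivalently, the 2n×2n Jacobian matrix DF(z) is invertible at every point z. -/

import Mathlib

noncomputable section

/-- The Euclidean plane ℝ². -/
abbrev Plane := EuclideanSpace ℝ (Fin 2)

/-- The bump function `b(X) = exp(−X²/(1−X²))` for `X < 1` and `b(X) = 0` for `X ≥ 1`. -/
def bump (X : ℝ) : ℝ :=
  if X < 1 then Real.exp (-(X ^ 2) / (1 - X ^ 2)) else 0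

/-- The evolution function of the ε-Go-To-The-Average protocol:
`F(z)_i = z_i + (ε/n) · Σ_j b(‖z_i − z_j‖²) · (z_j − z_i)`. -/
def goToTheAverage (n : ℕ) (ε : ℝ) (z : Fin n → Plane) : Fin n → Plane :=
  fun i => z i + (ε / n) • ∑ j, bump (‖z i - z j‖ ^ 2) • (z j - z i)


lemma glue_hasDerivAt (x : ℝ) :
    HasDerivAt expNegInvGlue (x⁻¹ ^ 2 * expNegInvGlue x) x := by
  have h := expNegInvGlue.hasDerivAt_polynomial_eval_inv_mul 1 x
  simpa using h

lemma bump_eq {X : ℝ} (hX : 0 ≤ X) :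
    bump X = Real.exp 1 * expNegInvGlue (1 - X ^ 2) := by
  unfold bump
  by_cases h : X < 1
  · have hy : 0 < 1 - X ^ 2 := by nlinarith
    rw [if_pos h, expNegInvGlue, if_neg (by linarith)]
    rw [← Real.exp_add]
    congr 1
    field_simp
    ring
  · rw [if_neg h]
    push_neg at h
    rw [expNegInvGlue.zero_of_nonpos (by nlinarith)]
    ring

lemma scalar_bound {X : ℝ} (hX : 0 ≤ X) :
    bump X + 4 * X ^ 2 * (Real.exp 1 * (((1 - X ^ 2)⁻¹) ^ 2 * expNegInvGlue (1 - X ^ 2))) ≤ 12 := by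
  by_cases h : X < 1
  · have hy0 : 0 < 1 - X ^ 2 := by nlinarith
    set y : ℝ := 1 - X ^ 2 with hy
    have hb : bump X = Real.exp (-(X ^ 2) / y) := by rw [bump, if_pos h]
    have hg : expNegInvGlue y = Real.exp (-y⁻¹) := by
      rw [expNegInvGlue, if_neg (not_le.2 hy0)]
    set u : ℝ := X ^ 2 / y with hu
    have hu0 : 0 ≤ u := div_nonneg (by positivity) hy0.le
    have h1 : -(X ^ 2) / y = -u := by rw [hu]; ring
    have hyu : y⁻¹ = 1 + u := by
      rw [hu]
      field_simp
      nlinarith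
    have hX2 : X ^ 2 = u * y := by rw [hu]; field_simp
    have hexp3 : Real.exp u = Real.exp (u/3) ^ 3 := by
      rw [← Real.exp_nat_mul]; ring_nf
    have h3 : u/3 + 1 ≤ Real.exp (u/3) := Real.add_one_le_exp _
    have hE : 1 + u + u^2/3 ≤ Real.exp u := by
      have hp : (u/3 + 1)^3 ≤ Real.exp (u/3) ^ 3 :=
        pow_le_pow_left₀ (by positivity) h3 3
      rw [hexp3]; nlinarith [pow_nonneg hu0 3]
    have hEpos : 0 < Real.exp u := Real.exp_pos u
    rw [hb, hg, h1]
    have hee : Real.exp 1 * Real.exp (-y⁻¹) = Real.exp (-u) := by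
      rw [← Real.exp_add, hyu]; ring_nf
    have hexpneg : Real.exp (-u) = (Real.exp u)⁻¹ := Real.exp_neg u
    have hyinv : (y⁻¹) ^ 2 = (1 + u)^2 := by rw [hyu]
    calc Real.exp (-u) + 4 * X ^ 2 * (Real.exp 1 * (y⁻¹ ^ 2 * Real.exp (-y⁻¹)))
        = Real.exp (-u) * (1 + 4 * u * (1 + u)) := by
          rw [hX2, hyinv]
          have : 4 * (u * y) * (Real.exp 1 * ((1+u)^2 * Real.exp (-y⁻¹)))
              = 4 * u * (y * (1+u)) * (1+u) * (Real.exp 1 * Real.exp (-y⁻¹)) := by ring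
          rw [this, hee]
          have hy1 : y * (1 + u) = 1 := by
            rw [← hyu]; field_simp
          rw [hy1]; ring
      _ ≤ 12 := by
          rw [hexpneg, inv_eq_one_div, mul_comm, mul_one_div, div_le_iff₀ hEpos]
          nlinarith
  · push_neg at h
    have h0 : bump X = 0 := by rw [bump, if_neg (not_lt.2 (by linarith))]
    have h1 : expNegInvGlue (1 - X ^ 2) = 0 :=
      expNegInvGlue.zero_of_nonpos (by nlinarith)
    rw [h0, h1]
    norm_num


set_option maxHeartbeats 1000000 in
lemma hasFDerivAt_bump_smul (w : Plane) :
    ∃ D : Plane →L[ℝ] Plane,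
      HasFDerivAt (fun x : Plane => bump (‖x‖ ^ 2) • x) D w ∧ ∀ v, ‖D v‖ ≤ 12 * ‖v‖ := by
  set S : Plane →L[ℝ] ℝ := 2 • innerSL ℝ w with hSdef
  have hS : HasFDerivAt (fun x : Plane => ‖x‖ ^ 2) S w :=
    (hasStrictFDerivAt_norm_sq w).hasFDerivAt
  set y : ℝ := 1 - ‖w‖ ^ 2 * ‖w‖ ^ 2 with hy
  have hinner : HasFDerivAt (fun x : Plane => (1:ℝ) - ‖x‖ ^ 2 * ‖x‖ ^ 2)
      (0 - (‖w‖ ^ 2 • S + ‖w‖ ^ 2 • S)) w := (hasFDerivAt_const 1 w).sub (hS.mul hS)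
  have hglue : HasDerivAt expNegInvGlue (y⁻¹ ^ 2 * expNegInvGlue y) y := glue_hasDerivAt y
  have hcomp : HasFDerivAt (fun x : Plane => expNegInvGlue (1 - ‖x‖ ^ 2 * ‖x‖ ^ 2))
      ((y⁻¹ ^ 2 * expNegInvGlue y) • (0 - (‖w‖ ^ 2 • S + ‖w‖ ^ 2 • S))) w :=
    by have h := hglue.comp_hasFDerivAt w hinner; exact h
  have hG : HasFDerivAt (fun x : Plane => Real.exp 1 * expNegInvGlue (1 - ‖x‖ ^ 2 * ‖x‖ ^ 2))
      (Real.exp 1 • ((y⁻¹ ^ 2 * expNegInvGlue y) • (0 - (‖w‖ ^ 2 • S + ‖w‖ ^ 2 • S)))) w := by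
    have := hcomp.const_mul (Real.exp 1)
    simpa using this
  have hf := hG.smul (hasFDerivAt_id w)
  have hfeq : (fun x : Plane => bump (‖x‖ ^ 2) • x)
      = fun x : Plane => (Real.exp 1 * expNegInvGlue (1 - ‖x‖ ^ 2 * ‖x‖ ^ 2)) • x := by
    funext x
    rw [bump_eq (sq_nonneg _), pow_two]
  refine ⟨_, by rw [hfeq]; exact hf, ?_⟩
  intro v
  have hb : bump (‖w‖ ^ 2) = Real.exp 1 * expNegInvGlue y := by
    rw [bump_eq (sq_nonneg _), pow_two, ← hy]
  set c : ℝ := ‖w‖ ^ 2 with hc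
  have happ : ((Real.exp 1 * expNegInvGlue (1 - ‖w‖ ^ 2 * ‖w‖ ^ 2)) •
        ContinuousLinearMap.id ℝ Plane +
      (Real.exp 1 • ((y⁻¹ ^ 2 * expNegInvGlue y) • (0 - (c • S + c • S)))).smulRight w) v
      = (Real.exp 1 * expNegInvGlue y) • v
        + (Real.exp 1 * ((y⁻¹ ^ 2 * expNegInvGlue y) * (-(2 * c * (S v))))) • w := by
    simp [ContinuousLinearMap.smul_apply, ContinuousLinearMap.add_apply,
      ContinuousLinearMap.smulRight_apply, ← hy]
    ring_nf
    rw [neg_smul]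
    have h4 : (1:ℝ) - ‖w‖ ^ 4 = y := by rw [hy, hc]; ring
    rw [h4]
  have hglue0 : 0 ≤ expNegInvGlue y := expNegInvGlue.nonneg y
  have hSv : |S v| ≤ 2 * (‖w‖ * ‖v‖) := by
    rw [hSdef]
    have : (2 • innerSL ℝ w) v = 2 * (inner ℝ w v : ℝ) := by
      simp [ContinuousLinearMap.smul_apply, real_inner_comm]
    rw [this, abs_mul, abs_of_pos (by norm_num : (0:ℝ) < 2)]
    exact mul_le_mul_of_nonneg_left (abs_real_inner_le_norm w v) (by norm_num)
  have hc0 : (0:ℝ) ≤ c := by rw [hc]; positivity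
  have hyc : 1 - c ^ 2 = y := by rw [hy, pow_two]
  have hw2 : ‖w‖ * ‖w‖ = c := by rw [hc, pow_two]
  calc ‖((Real.exp 1 * expNegInvGlue (1 - ‖w‖ ^ 2 * ‖w‖ ^ 2)) •
        ContinuousLinearMap.id ℝ Plane +
      (Real.exp 1 • ((y⁻¹ ^ 2 * expNegInvGlue y) • (0 - (c • S + c • S)))).smulRight w) v‖
      = ‖(Real.exp 1 * expNegInvGlue y) • v
        + (Real.exp 1 * ((y⁻¹ ^ 2 * expNegInvGlue y) * (-(2 * c * (S v))))) • w‖ := by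
        rw [happ]
    _ ≤ 12 * ‖v‖ := ?_
  refine le_trans (norm_add_le _ _) ?_
  rw [norm_smul, norm_smul, Real.norm_eq_abs, Real.norm_eq_abs,
    abs_of_nonneg (mul_nonneg (Real.exp_pos 1).le hglue0)]
  have h1 : |Real.exp 1 * ((y⁻¹ ^ 2 * expNegInvGlue y) * (-(2 * c * S v)))|
      ≤ Real.exp 1 * ((y⁻¹ ^ 2 * expNegInvGlue y) * (2 * c * (2 * (‖w‖ * ‖v‖)))) := by
    rw [abs_mul, abs_mul, abs_neg, abs_of_pos (Real.exp_pos 1),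
      abs_of_nonneg (mul_nonneg (sq_nonneg _) hglue0)]
    have h2 : |2 * c * S v| ≤ 2 * c * (2 * (‖w‖ * ‖v‖)) := by
      rw [abs_mul, abs_of_nonneg (by positivity : (0:ℝ) ≤ 2 * c)]
      exact mul_le_mul_of_nonneg_left hSv (by positivity)
    exact mul_le_mul_of_nonneg_left
      (mul_le_mul_of_nonneg_left h2 (mul_nonneg (sq_nonneg _) hglue0)) (Real.exp_pos 1).le
  have key := scalar_bound hc0
  rw [hyc] at key
  rw [hb] at key
  have key2 := mul_le_mul_of_nonneg_right key (norm_nonneg v)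
  have heq : Real.exp 1 * (y⁻¹ ^ 2 * expNegInvGlue y * (2 * c * (2 * (‖w‖ * ‖v‖)))) * ‖w‖
      = 4 * c ^ 2 * (Real.exp 1 * (y⁻¹ ^ 2 * expNegInvGlue y)) * ‖v‖ := by
    rw [pow_two, ← hw2]; ring
  nlinarith [mul_le_mul_of_nonneg_right h1 (norm_nonneg w), heq, key2]

theorem goToTheAverage_deriv_invertible
    (n : ℕ) (hn : 2 ≤ n) (ε : ℝ) (hε : 0 < ε)
    (hε' : ε < (n : ℝ) / (27 * ((n : ℝ) - 1)))
    (z : Fin n → Plane) :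
    Function.Bijective (fderiv ℝ (goToTheAverage n ε) z) := by
  choose D hD hDb using hasFDerivAt_bump_smul
  have hFeq : goToTheAverage n ε
      = fun x : Fin n → Plane => fun i => x i + (ε / n) • ∑ j, bump (‖x j - x i‖ ^ 2) • (x j - x i) := by
    funext x i
    unfold goToTheAverage
    congr 1
    congr 1
    exact Finset.sum_congr rfl fun j _ => by rw [norm_sub_rev]
  set A : (Fin n → Plane) →L[ℝ] (Fin n → Plane) :=
    ContinuousLinearMap.pi (fun i =>
      (ContinuousLinearMap.proj i : (Fin n → Plane) →L[ℝ] Plane) + (ε / n) • ∑ j, (D (z j - z i)).comp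
        ((ContinuousLinearMap.proj j : (Fin n → Plane) →L[ℝ] Plane) - ContinuousLinearMap.proj i)) with hA
  have hFd : HasFDerivAt (goToTheAverage n ε) A z := by
    rw [hFeq, hA]
    apply hasFDerivAt_pi.2
    intro i
    apply HasFDerivAt.add (hasFDerivAt_apply i z)
    apply HasFDerivAt.fun_const_smul
    apply HasFDerivAt.fun_sum
    intro j _
    have hsub : HasFDerivAt (fun x : Fin n → Plane => x j - x i)
        ((ContinuousLinearMap.proj j : (Fin n → Plane) →L[ℝ] Plane) - ContinuousLinearMap.proj i) z :=
      (hasFDerivAt_apply j z).sub (hasFDerivAt_apply i z)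
    exact (hD (z j - z i)).comp z hsub
  rw [hFd.fderiv]
  -- bound on 1 - A
  have hn1 : (1:ℝ) ≤ (n:ℝ) - 1 := by
    have : (2:ℝ) ≤ (n:ℝ) := by exact_mod_cast hn
    linarith
  have hnpos : (0:ℝ) < (n:ℝ) := by linarith
  set K : ℝ := ε / n * (24 * ((n:ℝ) - 1)) with hK
  have hK0 : 0 ≤ K := by positivity
  have hnormA : ‖1 - A‖ ≤ K := by
    apply ContinuousLinearMap.opNorm_le_bound _ hK0
    intro v
    rw [pi_norm_le_iff_of_nonneg (by positivity)]
    intro i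
    have happ : ((1 - A) v) i = -((ε / n) • ∑ j, (D (z j - z i)) (v j - v i)) := by
      simp [hA, ContinuousLinearMap.sub_apply, ContinuousLinearMap.pi_apply,
        ContinuousLinearMap.add_apply, ContinuousLinearMap.smul_apply,
        ContinuousLinearMap.sum_apply, ContinuousLinearMap.comp_apply,
        ContinuousLinearMap.proj_apply, ContinuousLinearMap.one_apply]
    rw [happ, norm_neg, norm_smul, Real.norm_eq_abs, abs_of_pos (by positivity)]
    have hsum : ‖∑ j, (D (z j - z i)) (v j - v i)‖ ≤ (n:ℝ) * (24 * ‖v‖) - 24 * ‖v‖ := by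
      refine le_trans (norm_sum_le _ _) ?_
      have hterm : ∀ j : Fin n, ‖(D (z j - z i)) (v j - v i)‖
          ≤ 24 * ‖v‖ - (if j = i then 24 * ‖v‖ else 0) := by
        intro j
        by_cases hji : j = i
        · subst hji
          simp only [sub_self, map_zero, norm_zero, if_pos rfl]
          norm_num
        · rw [if_neg hji]
          refine le_trans (hDb _ _) ?_
          have h1 : ‖v j - v i‖ ≤ ‖v j‖ + ‖v i‖ := norm_sub_le _ _
          have h2 : ‖v j‖ ≤ ‖v‖ := norm_le_pi_norm v j
          have h3 : ‖v i‖ ≤ ‖v‖ := norm_le_pi_norm v i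
          linarith
      refine le_trans (Finset.sum_le_sum fun j _ => hterm j) ?_
      rw [Finset.sum_sub_distrib, Finset.sum_const, Finset.sum_ite_eq' Finset.univ i
        (fun _ => 24 * ‖v‖), if_pos (Finset.mem_univ i)]
      simp [Finset.card_univ]
    calc ε / n * ‖∑ j, (D (z j - z i)) (v j - v i)‖
        ≤ ε / n * ((n:ℝ) * (24 * ‖v‖) - 24 * ‖v‖) :=
          mul_le_mul_of_nonneg_left hsum (by positivity)
      _ = K * ‖v‖ := by rw [hK]; ring
  have hKlt : K < 1 := by
    rw [hK]
    rw [lt_div_iff₀ (by positivity : (0:ℝ) < 27 * ((n:ℝ) - 1))] at hε'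
    rw [div_mul_eq_mul_div, div_lt_one hnpos]
    nlinarith
  have hnorm : ‖1 - A‖ < 1 := lt_of_le_of_lt hnormA hKlt
  have hUnit : IsUnit A := by
    have h := (Units.oneSub (1 - A) hnorm).isUnit
    rwa [Units.val_oneSub, sub_sub_cancel] at h
  obtain ⟨u, hu⟩ := hUnit
  constructor
  · intro a b hab
    have h1 : ∀ x, (↑u⁻¹ : (Fin n → Plane) →L[ℝ] (Fin n → Plane)) (A x) = x := by
      intro x
      rw [← hu]
      show ((↑u⁻¹ * ↑u : (Fin n → Plane) →L[ℝ] (Fin n → Plane))) x = x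
      rw [u.inv_mul]
      rfl
    have := congrArg (↑u⁻¹ : (Fin n → Plane) →L[ℝ] (Fin n → Plane)) hab
    rwa [h1, h1] at this
  · intro b
    refine ⟨(↑u⁻¹ : (Fin n → Plane) →L[ℝ] (Fin n → Plane)) b, ?_⟩
    rw [← hu]
    show ((↑u * ↑u⁻¹ : (Fin n → Plane) →L[ℝ] (Fin n → Plane))) b = b
    rw [u.mul_inv]
    rfl
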